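/- Let γ > 3, θ > 0, and ψ(x) = x^{-1/(γ-1)}. For each n, let G_n be the random graph on vertex set {1, …, n} in which, independently for each pair i < j, the edge {i, j} is present with probability min(1, θ ψ(i/n) ψ(j/n)/n). Then there exists a constant c > 0, depending only on γ and θ, such that P( max_v |𝒞_v| ≥ c n^{1/(γ−1)} ) → 1 as n → ∞; indeed with probability tending to 1 the degree of vertex 1 is at least c n^{1/(γ−1)}, and the component containing a vertex has at least as many vertices as that vertex's degree. -/

import Mathlib

open MeasureTheory ProbabilityTheory Filter Set

/-- Deterministic: the neighbors of `v` all lie in the connected component of `v`. -/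
lemma neighbor_card_le_component {V : Type*} [Finite V] (H : SimpleGraph V) (v : V) :
    Nat.card (H.neighborSet v) ≤ (H.connectedComponentMk v).supp.ncard := by
  rw [Nat.card_coe_set_eq]
  apply Set.ncard_le_ncard _ (Set.toFinite _)
  intro w hw
  have hadj : H.Adj v w := hw
  simp only [SimpleGraph.ConnectedComponent.mem_supp_iff]
  exact SimpleGraph.ConnectedComponent.sound hadj.symm.reachable

/-- The key quantitative estimate for a single `n`. -/
lemma chungLu_deg_estimate (γ θ : ℝ) (hγ : 3 < γ) (hθ0 : 0 < θ) {n : ℕ} (hn : 2 ≤ n)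
    {Ωn : Type} [MeasurableSpace Ωn] (μ : Measure Ωn) [IsProbabilityMeasure μ]
    (Gr : Ωn → SimpleGraph (Fin n))
    (hmeas : ∀ p : Sym2 (Fin n), MeasurableSet {ω | p ∈ (Gr ω).edgeSet})
    (hindep : iIndepSet (fun p : Sym2 (Fin n) => {ω | p ∈ (Gr ω).edgeSet}) μ)
    (hedge : ∀ i j : Fin n, i ≠ j →
      μ {ω | (Gr ω).Adj i j} =
        ENNReal.ofReal (min 1
          (θ * (((i : ℕ) + 1 : ℝ) / n) ^ (-(1 / (γ - 1)))
             * (((j : ℕ) + 1 : ℝ) / n) ^ (-(1 / (γ - 1))) / n)))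
    (v0 : Fin n) (hv0 : (v0 : ℕ) = 0)
    (hple : θ * (n : ℝ) ^ ((1 : ℝ) / (γ - 1) - 1) ≤ 1) :
    1 - ENNReal.ofReal (8 / (θ * (n : ℝ) ^ ((1 : ℝ) / (γ - 1)))) ≤
      μ {ω | θ / 4 * (n : ℝ) ^ ((1 : ℝ) / (γ - 1))
          ≤ (Nat.card ((Gr ω).neighborSet v0) : ℝ)} := by
  classical
  have hγ1 : (2 : ℝ) < γ - 1 := by linarith
  set s : ℝ := 1 / (γ - 1) with hs_def
  have hs0 : 0 < s := by positivity
  have hs1 : s < 1 := by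
    rw [hs_def, div_lt_one (by linarith)]; linarith
  have hn0 : (0 : ℝ) < n := by positivity
  have hnn : (1 : ℝ) ≤ n := by exact_mod_cast Nat.one_le_of_lt hn
  -- the Bernoulli parameters
  set p : ℝ := θ * (n : ℝ) ^ (s - 1) with hp_def
  have hp0 : 0 < p := by positivity
  -- the edge events from vertex v0
  set A : Fin n → Set Ωn := fun j => {ω | s(v0, j) ∈ (Gr ω).edgeSet} with hA_def
  have hAmeas : ∀ j, MeasurableSet (A j) := fun j => hmeas _
  have hAadj : ∀ j, A j = {ω | (Gr ω).Adj v0 j} := by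
    intro j; ext ω; exact (Gr ω).mem_edgeSet
  set X : Fin n → Ωn → ℝ := fun j => (A j).indicator 1 with hX_def
  set S : Finset (Fin n) := Finset.univ.erase v0 with hS_def
  set D : Ωn → ℝ := ∑ j ∈ S, X j with hD_def
  have hX2 : ∀ j, MemLp (X j) 2 μ := fun j => (memLp_const (1 : ℝ)).indicator (hAmeas j)
  have hXsq : ∀ j, X j ^ 2 = X j := by
    intro j; funext ω
    by_cases h : ω ∈ A j <;> simp [hX_def, Set.indicator_apply, h]
  have hXm : ∀ j, Measurable (X j) := fun j => measurable_one.indicator (hAmeas j)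
  -- expectation of each indicator
  have hEX : ∀ j ∈ S, p ≤ μ[X j] ∧ μ[X j] ≤ 1 := by
    intro j hj
    have hne : v0 ≠ j := fun h => (Finset.mem_erase.1 hj).1 h.symm
    have hint : μ[X j] = (μ (A j)).toReal := by
      simp [hX_def, MeasureTheory.integral_indicator_const, hAmeas j, measureReal_def]
    set q : ℝ := θ * (((v0 : ℕ) + 1 : ℝ) / n) ^ (-(1 / (γ - 1)))
        * (((j : ℕ) + 1 : ℝ) / n) ^ (-(1 / (γ - 1))) / n with hq_def
    have hμA : μ (A j) = ENNReal.ofReal (min 1 q) := by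
      rw [hAadj j, hedge v0 j hne]
    have hq_ge : p ≤ q := by
      have h1 : (((v0 : ℕ) + 1 : ℝ) / n) ^ (-(1 / (γ - 1))) = (n : ℝ) ^ s := by
        rw [hv0]
        rw [show (((0 : ℕ) : ℝ) + 1) / (n : ℝ) = ((n : ℝ))⁻¹ by norm_num]
        rw [Real.inv_rpow hn0.le, ← Real.rpow_neg hn0.le, neg_neg, ← hs_def]
      have h2 : (1 : ℝ) ≤ (((j : ℕ) + 1 : ℝ) / n) ^ (-(1 / (γ - 1))) := by
        apply Real.one_le_rpow_of_pos_of_le_one_of_nonpos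
        · positivity
        · rw [div_le_one hn0]
          have := j.isLt
          exact_mod_cast this
        · rw [neg_nonpos]; positivity
      have h3 : (n : ℝ) ^ (s - 1) = (n : ℝ) ^ s / n := by
        rw [Real.rpow_sub hn0, Real.rpow_one]
      rw [hq_def, hp_def, h1, h3]
      have hpos : (0:ℝ) ≤ θ * ((n : ℝ) ^ s / n) := by positivity
      have h4 := mul_le_mul_of_nonneg_left h2 hpos
      rw [mul_one] at h4
      calc θ * ((n : ℝ) ^ s / n)
          ≤ θ * ((n : ℝ) ^ s / n) * (((j : ℕ) + 1 : ℝ) / n) ^ (-(1 / (γ - 1))) := h4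
        _ = θ * (n : ℝ) ^ s * (((j : ℕ) + 1 : ℝ) / n) ^ (-(1 / (γ - 1))) / n := by ring
    have hq0 : 0 ≤ q := le_trans hp0.le hq_ge
    have htoReal : μ[X j] = min 1 q := by
      rw [hint, hμA, ENNReal.toReal_ofReal (le_min zero_le_one hq0)]
    constructor
    · rw [htoReal]
      exact le_min hple hq_ge
    · rw [htoReal]; exact min_le_left _ _
  -- mean of D
  have hint' : ∀ j ∈ S, Integrable (X j) μ := fun j _ => (hX2 j).integrable one_le_two
  have hED : μ[D] = ∑ j ∈ S, μ[X j] := by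
    rw [hD_def]
    rw [show ((∑ j ∈ S, X j : Ωn → ℝ)) = fun a => ∑ j ∈ S, X j a from
      funext fun a => Finset.sum_apply a S X]
    exact integral_finset_sum S hint'
  set m : ℝ := μ[D] with hm_def
  have hScard : (S.card : ℝ) = (n : ℝ) - 1 := by
    rw [hS_def, Finset.card_erase_of_mem (Finset.mem_univ v0), Finset.card_univ,
      Fintype.card_fin]
    have : 1 ≤ n := by omega
    push_cast [this]
    ring
  have hm_lb : θ / 2 * (n : ℝ) ^ s ≤ m := by
    have h1 : (S.card : ℝ) * p ≤ m := by
      rw [hED]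
      calc (S.card : ℝ) * p = ∑ _j ∈ S, p := by rw [Finset.sum_const, nsmul_eq_mul]
      _ ≤ ∑ j ∈ S, μ[X j] := Finset.sum_le_sum fun j hj => (hEX j hj).1
    have h2 : (n : ℝ) ^ s = (n : ℝ) * (n : ℝ) ^ (s - 1) := by
      have h2' := Real.rpow_add hn0 1 (s - 1)
      rw [show (1 : ℝ) + (s - 1) = s from by ring, Real.rpow_one] at h2'
      exact h2'
    have hn2 : (2 : ℝ) ≤ n := by exact_mod_cast hn
    rw [hScard] at h1
    have hrp : 0 < (n : ℝ) ^ (s - 1) := Real.rpow_pos_of_pos hn0 _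
    nlinarith [hrp, hθ0]
  have hm0 : 0 < m := lt_of_lt_of_le (by positivity) hm_lb
  -- variance bound
  have hY : iIndepFun
      (fun pr : Sym2 (Fin n) => ({ω | pr ∈ (Gr ω).edgeSet} : Set Ωn).indicator
        (fun _ => (1 : ℝ))) μ := hindep.iIndepFun_indicator
  have hpair : Set.Pairwise ↑S fun i j => IndepFun (X i) (X j) μ := by
    intro i _ j _ hij
    have hne : s(v0, i) ≠ s(v0, j) := fun h => hij (Sym2.congr_right.mp h)
    exact hY.indepFun hne
  have hvar : variance D μ ≤ m := by
    rw [hD_def, IndepFun.variance_sum (fun j _ => hX2 j) hpair, hED]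
    apply Finset.sum_le_sum
    intro j hj
    rw [variance_eq_sub (hX2 j), hXsq j]
    nlinarith [sq_nonneg (μ[X j])]
  have hMemD : MemLp D 2 μ := memLp_finset_sum' S fun j _ => hX2 j
  -- Chebyshev
  have hcheb : μ {ω | m / 2 ≤ |D ω - μ[D]|}
      ≤ ENNReal.ofReal (variance D μ / (m / 2) ^ 2) :=
    meas_ge_le_variance_div_sq hMemD (by linarith)
  have hbound : ENNReal.ofReal (variance D μ / (m / 2) ^ 2)
      ≤ ENNReal.ofReal (8 / (θ * (n : ℝ) ^ s)) := by
    apply ENNReal.ofReal_le_ofReal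
    have h4 : variance D μ / (m / 2) ^ 2 ≤ m / (m / 2) ^ 2 := by
      apply div_le_div_of_nonneg_right hvar (by positivity)  -- maybe wrong name
    have h5 : m / (m / 2) ^ 2 = 4 / m := by
      field_simp
      ring
    have h6 : 4 / m ≤ 8 / (θ * (n : ℝ) ^ s) := by
      rw [div_le_div_iff₀ hm0 (by positivity)]
      nlinarith [hm_lb]
    calc variance D μ / (m / 2) ^ 2 ≤ m / (m / 2) ^ 2 := h4
      _ = 4 / m := h5
      _ ≤ 8 / (θ * (n : ℝ) ^ s) := h6
  -- D equals the degree of v0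
  have hDdeg : ∀ ω, D ω = (Nat.card ((Gr ω).neighborSet v0) : ℝ) := by
    intro ω
    have h1 : D ω = ((S.filter fun j => ω ∈ A j).card : ℝ) := by
      rw [hD_def, Finset.sum_apply]
      rw [← Finset.sum_boole]
      apply Finset.sum_congr rfl
      intro j _
      simp [hX_def, Set.indicator_apply]
    have h2 : ((Gr ω).neighborSet v0) = ↑(S.filter fun j => ω ∈ A j) := by
      ext w
      simp only [Finset.coe_filter, hAadj, Set.mem_setOf_eq, hS_def, Finset.mem_erase,
        Finset.mem_univ, true_and, and_true, SimpleGraph.mem_neighborSet]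
      constructor
      · intro h
        exact ⟨h.ne', h⟩
      · intro h
        exact h.2
    rw [h1, Nat.card_coe_set_eq, h2, Set.ncard_coe_finset]
  -- put everything together
  have hDmeas : Measurable D := by
    rw [hD_def, show ((∑ j ∈ S, X j : Ωn → ℝ)) = fun a => ∑ j ∈ S, X j a from
      funext fun a => Finset.sum_apply a S X]
    exact Finset.measurable_sum S fun j _ => hXm j
  have hbadmeas : MeasurableSet {ω | m / 2 ≤ |D ω - μ[D]|} :=
    measurableSet_le measurable_const ((hDmeas.sub measurable_const).abs)
  have hsubset : {ω | m / 2 ≤ |D ω - μ[D]|}ᶜ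
      ⊆ {ω | θ / 4 * (n : ℝ) ^ s ≤ (Nat.card ((Gr ω).neighborSet v0) : ℝ)} := by
    intro ω hω
    simp only [Set.mem_compl_iff, Set.mem_setOf_eq, not_le] at hω
    have h1 : m / 2 < D ω := by
      rw [← hm_def] at hω
      have := abs_lt.1 hω
      linarith [this.1]
    rw [Set.mem_setOf_eq, ← hDdeg ω]
    linarith [hm_lb]
  calc 1 - ENNReal.ofReal (8 / (θ * (n : ℝ) ^ s))
      ≤ 1 - μ {ω | m / 2 ≤ |D ω - μ[D]|} :=
        tsub_le_tsub_left (le_trans hcheb hbound) 1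
    _ = μ ({ω | m / 2 ≤ |D ω - μ[D]|}ᶜ) := (prob_compl_eq_one_sub hbadmeas).symm
    _ ≤ _ := measure_mono hsubset

theorem chungLu_max_cluster_lower_bound (γ θ : ℝ) (hγ : 3 < γ) (hθ0 : 0 < θ)
    (Ω : ℕ → Type) [∀ n, MeasurableSpace (Ω n)]
    (μ : ∀ n, Measure (Ω n)) [∀ n, IsProbabilityMeasure (μ n)]
    (G : ∀ n, Ω n → SimpleGraph (Fin n))
    (hmeas : ∀ n (p : Sym2 (Fin n)), MeasurableSet {ω | p ∈ (G n ω).edgeSet})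
    (hindep : ∀ n,
      iIndepSet (fun p : Sym2 (Fin n) => {ω | p ∈ (G n ω).edgeSet}) (μ n))
    (hedge : ∀ n, ∀ i j : Fin n, i ≠ j →
      μ n {ω | (G n ω).Adj i j} =
        ENNReal.ofReal (min 1
          (θ * (((i : ℕ) + 1 : ℝ) / n) ^ (-(1 / (γ - 1)))
             * (((j : ℕ) + 1 : ℝ) / n) ^ (-(1 / (γ - 1))) / n))) :
    ∃ c : ℝ, 0 < c ∧
      Tendsto
        (fun n => μ n {ω | ∀ v : Fin n, (v : ℕ) = 0 →
          c * (n : ℝ) ^ ((1:ℝ) / (γ - 1))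
            ≤ (Nat.card ((G n ω).neighborSet v) : ℝ)})
        atTop (nhds 1) ∧
      Tendsto
        (fun n => μ n {ω | ∃ v : Fin n,
          c * (n : ℝ) ^ ((1:ℝ) / (γ - 1))
            ≤ (((G n ω).connectedComponentMk v).supp.ncard : ℝ)})
        atTop (nhds 1) ∧
      ∀ n (ω : Ω n) (v : Fin n),
        Nat.card ((G n ω).neighborSet v)
          ≤ ((G n ω).connectedComponentMk v).supp.ncard := by
  have hγ1 : (2 : ℝ) < γ - 1 := by linarith
  have hs0 : (0 : ℝ) < 1 / (γ - 1) := by positivity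
  refine ⟨θ / 4, by positivity, ?_⟩
  -- the eventual hypotheses
  have hev : ∀ᶠ n : ℕ in atTop, 2 ≤ n ∧ θ * (n : ℝ) ^ ((1 : ℝ) / (γ - 1) - 1) ≤ 1 := by
    have h2 : Tendsto (fun x : ℝ => x ^ (-(1 - 1 / (γ - 1)))) atTop (nhds 0) :=
      tendsto_rpow_neg_atTop (by rw [sub_pos, div_lt_one (by linarith)]; linarith)
    have h3 : Tendsto (fun n : ℕ => θ * (n : ℝ) ^ ((1 : ℝ) / (γ - 1) - 1)) atTop (nhds 0) := by
      have h4 := (h2.comp tendsto_natCast_atTop_atTop).const_mul θ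
      simpa [show -(1 - 1 / (γ - 1)) = 1 / (γ - 1) - 1 from by ring, Function.comp] using h4
    filter_upwards [eventually_ge_atTop 2, h3.eventually (eventually_le_nhds one_pos)]
      with n h1 h2
    exact ⟨h1, h2⟩
  -- the lower bound sequence tends to 1
  have hlow : Tendsto
      (fun n : ℕ => 1 - ENNReal.ofReal (8 / (θ * (n : ℝ) ^ ((1 : ℝ) / (γ - 1)))))
      atTop (nhds 1) := by
    have hd : Tendsto (fun n : ℕ => θ * (n : ℝ) ^ ((1 : ℝ) / (γ - 1))) atTop atTop := by
      have := (tendsto_rpow_atTop hs0).comp (tendsto_natCast_atTop_atTop (R := ℝ))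
      exact Tendsto.const_mul_atTop hθ0 this
    have h2 : Tendsto (fun n : ℕ => 8 / (θ * (n : ℝ) ^ ((1 : ℝ) / (γ - 1)))) atTop (nhds 0) :=
      Tendsto.div_atTop tendsto_const_nhds hd
    have h3 : Tendsto
        (fun n : ℕ => ENNReal.ofReal (8 / (θ * (n : ℝ) ^ ((1 : ℝ) / (γ - 1)))))
        atTop (nhds 0) := by
      have := (ENNReal.continuous_ofReal.tendsto 0).comp h2
      simpa [Function.comp_def] using this
    have := ENNReal.Tendsto.sub ((tendsto_const_nhds : Tendsto (fun _ : ℕ => (1 : ENNReal)) atTop (nhds 1)))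
      h3 (Or.inl ENNReal.one_ne_top)
    simpa using this
  -- the key eventual inequality for the degree event
  have key1 : ∀ᶠ n : ℕ in atTop,
      1 - ENNReal.ofReal (8 / (θ * (n : ℝ) ^ ((1 : ℝ) / (γ - 1))))
        ≤ μ n {ω | ∀ v : Fin n, (v : ℕ) = 0 →
            θ / 4 * (n : ℝ) ^ ((1 : ℝ) / (γ - 1))
              ≤ (Nat.card ((G n ω).neighborSet v) : ℝ)} := by
    filter_upwards [hev] with n hn
    obtain ⟨hn2, hple⟩ := hn
    have hn0 : 0 < n := by omega
    have hest := chungLu_deg_estimate γ θ hγ hθ0 hn2 (μ n) (G n) (hmeas n) (hindep n)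
      (hedge n) ⟨0, hn0⟩ rfl hple
    refine le_trans hest (measure_mono ?_)
    intro ω hω v hv
    have hveq : v = ⟨0, hn0⟩ := Fin.ext hv
    rw [hveq]
    exact hω
  have key2 : ∀ᶠ n : ℕ in atTop,
      1 - ENNReal.ofReal (8 / (θ * (n : ℝ) ^ ((1 : ℝ) / (γ - 1))))
        ≤ μ n {ω | ∃ v : Fin n,
            θ / 4 * (n : ℝ) ^ ((1 : ℝ) / (γ - 1))
              ≤ (((G n ω).connectedComponentMk v).supp.ncard : ℝ)} := by
    filter_upwards [hev] with n hn
    obtain ⟨hn2, hple⟩ := hn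
    have hn0 : 0 < n := by omega
    have hest := chungLu_deg_estimate γ θ hγ hθ0 hn2 (μ n) (G n) (hmeas n) (hindep n)
      (hedge n) ⟨0, hn0⟩ rfl hple
    refine le_trans hest (measure_mono ?_)
    intro ω hω
    refine ⟨⟨0, hn0⟩, le_trans hω ?_⟩
    exact_mod_cast Nat.cast_le.mpr (neighbor_card_le_component (G n ω) ⟨0, hn0⟩)
  refine ⟨?_, ?_, fun n ω v => neighbor_card_le_component (G n ω) v⟩
  · exact tendsto_of_tendsto_of_tendsto_of_le_of_le' hlow tendsto_const_nhds key1
      (Filter.Eventually.of_forall fun n => prob_le_one)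
  · exact tendsto_of_tendsto_of_tendsto_of_le_of_le' hlow tendsto_const_nhds key2
      (Filter.Eventually.of_forall fun n => prob_le_one)
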